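/- With V± := i(D±U± − U±²) and D_{x±} := i D±², the following identity holds without any assumption on Ω := D₊U₋ + D₋U₊ − {U₊,U₋}: D_{x+}V₋ − D_{x−}V₊ + [V₋, V₊] = D₊D₋Ω + {D₊Ω, U₋} − {D₋Ω, U₊} + [D₋U₊, Ω] + U₋ΩU₊ − U₊ΩU₋ + ΩU₊U₋ − U₋U₊Ω. In particular the classical zero-curvature condition for V± holds whenever Ω = 0. -/

import Mathlib

/-- An even derivation of a ℤ/2-graded associative unital ℂ-algebra `A` with grading `𝒜`:
a ℂ-linear map preserving the parity of homogeneous elements and satisfying the Leibniz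
rule `∂(ab) = (∂a)b + a(∂b)`. -/
def IsEvenDerivation {A : Type*} [Ring A] [Algebra ℂ A]
    (𝒜 : ZMod 2 → Submodule ℂ A) (d : A →ₗ[ℂ] A) : Prop :=
  (∀ i : ZMod 2, ∀ a ∈ 𝒜 i, d a ∈ 𝒜 i) ∧
  ∀ a b : A, d (a * b) = d a * b + a * d b

/-- An odd derivation of a ℤ/2-graded associative unital ℂ-algebra `A` with grading `𝒜`:
a ℂ-linear map shifting parity by one and satisfying the graded Leibniz rule
`D(ab) = (Da)b + (-1)^i a (Db)` for homogeneous `a` of parity `i`. -/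
def IsOddDerivation {A : Type*} [Ring A] [Algebra ℂ A]
    (𝒜 : ZMod 2 → Submodule ℂ A) (d : A →ₗ[ℂ] A) : Prop :=
  (∀ i : ZMod 2, ∀ a ∈ 𝒜 i, d a ∈ 𝒜 (i + 1)) ∧
  ∀ i : ZMod 2, ∀ a ∈ 𝒜 i, ∀ b : A, d (a * b) = d a * b + ((-1 : ℂ) ^ i.val) • (a * d b)

/-- `θ` supercommutes with every homogeneous element: `θ a = (-1)^i a θ` for `a` of parity `i`. -/
def Supercommutes {A : Type*} [Ring A] [Algebra ℂ A]
    (𝒜 : ZMod 2 → Submodule ℂ A) (θ : A) : Prop :=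
  ∀ i : ZMod 2, ∀ a ∈ 𝒜 i, θ * a = ((-1 : ℂ) ^ i.val) • (a * θ)

/-- With `V± := i(D±U± − U±²)` and `D_{x±} := i D±²`, one has, without
any assumption on `Ω := D₊U₋ + D₋U₊ − {U₊,U₋}`:
`D_{x+}V₋ − D_{x−}V₊ + [V₋,V₊] = D₊D₋Ω + {D₊Ω,U₋} − {D₋Ω,U₊} + [D₋U₊,Ω] + U₋ΩU₊ − U₊ΩU₋
+ ΩU₊U₋ − U₋U₊Ω`; in particular the classical zero-curvature condition for `V±` holds
whenever `Ω = 0`. -/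
theorem stmt3 {A : Type*} [Ring A] [Algebra ℂ A]
    (𝒜 : ZMod 2 → Submodule ℂ A) [GradedAlgebra 𝒜]
    (DP DM : A →ₗ[ℂ] A)
    (hDP : IsOddDerivation 𝒜 DP) (hDM : IsOddDerivation 𝒜 DM)
    (hanti : ∀ a, DP (DM a) + DM (DP a) = 0)
    (UP UM : A) (hUP : UP ∈ 𝒜 1) (hUM : UM ∈ 𝒜 1)
    (Ω : A) (hΩ : Ω = DP UM + DM UP - (UP * UM + UM * UP))
    (VP VM : A)
    (hVP : VP = Complex.I • (DP UP - UP * UP))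
    (hVM : VM = Complex.I • (DM UM - UM * UM)) :
    (Complex.I • DP (DP VM) - Complex.I • DM (DM VP) + (VM * VP - VP * VM) =
      DP (DM Ω) + (DP Ω * UM + UM * DP Ω) - (DM Ω * UP + UP * DM Ω)
        + (DM UP * Ω - Ω * DM UP)
        + UM * Ω * UP - UP * Ω * UM + Ω * UP * UM - UM * UP * Ω) ∧
    (Ω = 0 →
      Complex.I • DP (DP VM) - Complex.I • DM (DM VP) + (VM * VP - VP * VM) = 0) := by
  have hpm : ∀ a : A, DP (DM a) = -DM (DP a) :=
    fun a => eq_neg_of_add_eq_zero_left (hanti a)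
  have hv1 : (1 : ZMod 2).val = 1 := rfl
  have hv0 : (0 : ZMod 2).val = 0 := rfl
  have hP1 : ∀ a ∈ 𝒜 1, ∀ b : A, DP (a * b) = DP a * b - a * DP b := by
    intro a ha b
    rw [hDP.2 1 a ha b, hv1, pow_one, neg_one_smul, ← sub_eq_add_neg]
  have hM1 : ∀ a ∈ 𝒜 1, ∀ b : A, DM (a * b) = DM a * b - a * DM b := by
    intro a ha b
    rw [hDM.2 1 a ha b, hv1, pow_one, neg_one_smul, ← sub_eq_add_neg]
  have hP0 : ∀ a ∈ 𝒜 0, ∀ b : A, DP (a * b) = DP a * b + a * DP b := by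
    intro a ha b
    rw [hDP.2 0 a ha b, hv0, pow_zero, one_smul]
  have hM0 : ∀ a ∈ 𝒜 0, ∀ b : A, DM (a * b) = DM a * b + a * DM b := by
    intro a ha b
    rw [hDM.2 0 a ha b, hv0, pow_zero, one_smul]
  have h11 : (1 + 1 : ZMod 2) = 0 := rfl
  have hPv : DP UM ∈ 𝒜 0 := h11 ▸ hDP.1 1 UM hUM
  have hPu : DP UP ∈ 𝒜 0 := h11 ▸ hDP.1 1 UP hUP
  have hMv : DM UM ∈ 𝒜 0 := h11 ▸ hDM.1 1 UM hUM
  have hMu : DM UP ∈ 𝒜 0 := h11 ▸ hDM.1 1 UP hUP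
  have key : Complex.I • DP (DP VM) - Complex.I • DM (DM VP) + (VM * VP - VP * VM) =
      DP (DM Ω) + (DP Ω * UM + UM * DP Ω) - (DM Ω * UP + UP * DM Ω)
        + (DM UP * Ω - Ω * DM UP)
        + UM * Ω * UP - UP * Ω * UM + Ω * UP * UM - UM * UP * Ω := by
    subst hΩ hVP hVM
    simp only [map_add, map_sub, map_smul, map_neg, smul_add, smul_sub, smul_neg,
      smul_smul, Complex.I_mul_I, neg_one_smul, smul_mul_assoc, mul_smul_comm,
      mul_add, mul_sub, add_mul, sub_mul, neg_mul, mul_neg, neg_neg, neg_smul,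
      hP1 _ hUM, hP1 _ hUP, hM1 _ hUM, hM1 _ hUP,
      hP0 _ hPv, hP0 _ hPu, hP0 _ hMv, hP0 _ hMu,
      hM0 _ hPv, hM0 _ hPu, hM0 _ hMv, hM0 _ hMu, hpm]
    noncomm_ring
    simp only [one_smul]
    abel
  refine ⟨key, fun h => ?_⟩
  rw [h] at key
  simpa using key
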